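/- arXiv:2502.16465 — 2 statements merged into one kernel-verified Lean document; each statement's English description precedes it below -/
import Mathlib

section
/- Let G be a finite connected simple graph, κ_0 > 0, and α ∈ [0,1). With I^α_{κ_0} = ∑_{xy∈E} max{0, (1−α)κ_0 − κ_α(x,y)}, the diameter of G satisfies Diam(G) ≤ ⌊(2 + I^α_{κ_0}/(1−α)) / κ_0⌋. -/
open Finset

/-- A probability measure on a finite set, given as a density. -/
def IsProbMeasure {V : Type*} [Fintype V] (m : V → ℝ) : Prop :=
  (∀ x, 0 ≤ m x) ∧ ∑ x, m x = 1

/-- A coupling between two probability measures on a finite set. -/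
def IsCoupling {V : Type*} [Fintype V] (A : V × V → ℝ) (m₁ m₂ : V → ℝ) : Prop :=
  (∀ p, 0 ≤ A p) ∧ (∀ x, ∑ y, A (x, y) = m₁ x) ∧ (∀ y, ∑ x, A (x, y) = m₂ y)

/-- The Wasserstein-1 (transportation) distance between two probability measures on a
finite set, with respect to a cost `d`. -/
noncomputable def W {V : Type*} [Fintype V] (d : V → V → ℝ) (m₁ m₂ : V → ℝ) : ℝ :=
  sInf {c | ∃ A, IsCoupling A m₁ m₂ ∧ c = ∑ p : V × V, A p * d p.1 p.2}

lemma W_symm {V : Type*} [Fintype V] (d : V → V → ℝ) (hd : ∀ x y, d x y = d y x)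
    (m₁ m₂ : V → ℝ) : W d m₁ m₂ = W d m₂ m₁ := by
  have key : ∀ m₁ m₂ : V → ℝ,
      {c | ∃ A, IsCoupling A m₁ m₂ ∧ c = ∑ p : V × V, A p * d p.1 p.2} ⊆
      {c | ∃ A, IsCoupling A m₂ m₁ ∧ c = ∑ p : V × V, A p * d p.1 p.2} := by
    rintro m₁ m₂ c ⟨A, ⟨h0, h1, h2⟩, rfl⟩
    refine ⟨fun p => A (p.2, p.1), ⟨fun p => h0 _, fun x => h2 x, fun y => h1 y⟩, ?_⟩
    refine Fintype.sum_equiv (Equiv.prodComm V V) _ _ ?_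
    intro p
    simp [Equiv.prodComm, hd p.1 p.2]
  unfold W
  congr 1
  exact Set.Subset.antisymm (key m₁ m₂) (key m₂ m₁)

/-- The `α`-lazy random walk measure at a vertex `x` of a graph. -/
noncomputable def lazyWalk {V : Type*} [Fintype V] [DecidableEq V] (G : SimpleGraph V)
    [DecidableRel G.Adj] (α : ℝ) (x : V) : V → ℝ :=
  fun v => if v = x then α else if G.Adj x v then (1 - α) / (G.degree x) else 0

/-- The `α`-Ricci curvature `κ_α(x,y) = 1 - W(m_x^α, m_y^α)/d(x,y)`. -/
noncomputable def kappaAlpha {V : Type*} [Fintype V] [DecidableEq V] (G : SimpleGraph V)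
    [DecidableRel G.Adj] (α : ℝ) (x y : V) : ℝ :=
  1 - W (fun a b => (G.dist a b : ℝ)) (lazyWalk G α x) (lazyWalk G α y) / (G.dist x y)

lemma kappaAlpha_symm {V : Type*} [Fintype V] [DecidableEq V] (G : SimpleGraph V)
    [DecidableRel G.Adj] (α : ℝ) (x y : V) :
    kappaAlpha G α x y = kappaAlpha G α y x := by
  unfold kappaAlpha
  rw [W_symm _ (fun a b => by rw [SimpleGraph.dist_comm]),
    SimpleGraph.dist_comm]

/-- The Lin–Lu–Yau Ricci curvature `κ_LLY(x,y) = lim_{α → 1⁻} κ_α(x,y)/(1-α)`. -/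
noncomputable def kappaLLY {V : Type*} [Fintype V] [DecidableEq V] (G : SimpleGraph V)
    [DecidableRel G.Adj] (x y : V) : ℝ :=
  Filter.limUnder (nhdsWithin 1 (Set.Ico (0:ℝ) 1)) (fun α => kappaAlpha G α x y / (1 - α))

lemma kappaLLY_symm {V : Type*} [Fintype V] [DecidableEq V] (G : SimpleGraph V)
    [DecidableRel G.Adj] (x y : V) : kappaLLY G x y = kappaLLY G y x := by
  unfold kappaLLY
  congr 1
  funext α
  rw [kappaAlpha_symm]

/-- Integral `α`-Ricci curvature `I^α_{κ₀}`: total amount of `α`-Ricci curvature below the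
threshold `(1-α)κ₀`, summed over the edges of `G`. -/
noncomputable def IAlpha {V : Type*} [Fintype V] [DecidableEq V] (G : SimpleGraph V)
    [DecidableRel G.Adj] (α κ₀ : ℝ) : ℝ :=
  ∑ e ∈ G.edgeFinset,
    Sym2.lift ⟨fun x y => max 0 ((1 - α) * κ₀ - kappaAlpha G α x y),
      fun x y => by simp only []; rw [kappaAlpha_symm]⟩ e

/-- Integral Lin–Lu–Yau Ricci curvature `I_{κ₀}`: total amount of Lin–Lu–Yau Ricci curvature
below the threshold `κ₀`, summed over the edges of `G`. -/
noncomputable def ILLY {V : Type*} [Fintype V] [DecidableEq V] (G : SimpleGraph V)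
    [DecidableRel G.Adj] (κ₀ : ℝ) : ℝ :=
  ∑ e ∈ G.edgeFinset,
    Sym2.lift ⟨fun x y => max 0 (κ₀ - kappaLLY G x y),
      fun x y => by simp only []; rw [kappaLLY_symm]⟩ e

/-- The diameter of a finite graph. -/
noncomputable def gDiam {V : Type*} [Fintype V] (G : SimpleGraph V) : ℕ :=
  Finset.univ.sup fun p : V × V => G.dist p.1 p.2

lemma lazyWalk_expect {V : Type*} [Fintype V] [DecidableEq V] (G : SimpleGraph V)
    [DecidableRel G.Adj] (α : ℝ) (x : V) (f : V → ℝ) :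
    ∑ v, lazyWalk G α x v * f v
      = α * f x + ∑ v ∈ G.neighborFinset x, (1 - α) / (G.degree x) * f v := by
  have h1 : ∀ v, lazyWalk G α x v * f v =
      (if v = x then α * f v else 0) +
      (if v ∈ G.neighborFinset x then (1 - α) / (G.degree x) * f v else 0) := by
    intro v
    unfold lazyWalk
    by_cases h : v = x
    · subst h; simp [G.irrefl]
    · by_cases h2 : G.Adj x v <;> simp [h, h2]
  simp only [h1, Finset.sum_add_distrib, Finset.sum_ite_eq' Finset.univ x, Finset.mem_univ,
    if_true]
  congr 1
  rw [Finset.sum_ite_mem, Finset.univ_inter]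

lemma lazyWalk_isProb {V : Type*} [Fintype V] [DecidableEq V] (G : SimpleGraph V)
    [DecidableRel G.Adj] {α : ℝ} (hα0 : 0 ≤ α) (hα1 : α ≤ 1) {x : V}
    (hd : 0 < G.degree x) : IsProbMeasure (lazyWalk G α x) := by
  constructor
  · intro v
    unfold lazyWalk
    by_cases h : v = x
    · simp [h, hα0]
    · by_cases h2 : G.Adj x v <;> simp [h, h2]
      exact div_nonneg (by linarith) (Nat.cast_nonneg _)
  · have := lazyWalk_expect G α x (fun _ => 1)
    simp only [mul_one] at this
    rw [this, Finset.sum_const, SimpleGraph.card_neighborFinset_eq_degree, nsmul_eq_mul]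
    have hd' : (G.degree x : ℝ) ≠ 0 := by positivity
    field_simp
    ring

lemma W_ge {V : Type*} [Fintype V] (d : V → V → ℝ) (hd : ∀ p : V × V, 0 ≤ d p.1 p.2)
    (f : V → ℝ) (hf : ∀ a b, f b - f a ≤ d a b) (m₁ m₂ : V → ℝ)
    (h₁ : IsProbMeasure m₁) (h₂ : IsProbMeasure m₂) :
    ∑ v, m₂ v * f v - ∑ v, m₁ v * f v ≤ W d m₁ m₂ := by
  apply le_csInf
  · refine ⟨_, ⟨fun p : V × V => m₁ p.1 * m₂ p.2, ⟨fun q => mul_nonneg (h₁.1 _) (h₂.1 _),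
      ?_, ?_⟩, rfl⟩⟩
    · intro a
      simp only []
      rw [← Finset.mul_sum, h₂.2, mul_one]
    · intro b
      simp only []
      rw [← Finset.sum_mul, h₁.2, one_mul]
  · rintro c ⟨A, ⟨h0, hA1, hA2⟩, rfl⟩
    have key : ∑ p : V × V, A p * (f p.2 - f p.1) ≤ ∑ p : V × V, A p * d p.1 p.2 :=
      Finset.sum_le_sum fun p _ => mul_le_mul_of_nonneg_left (hf p.1 p.2) (h0 p)
    refine le_trans (le_of_eq ?_) key
    simp only [mul_sub, Finset.sum_sub_distrib]
    congr 1
    · rw [Fintype.sum_prod_type_right]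
      refine Finset.sum_congr rfl fun y _ => ?_
      calc m₂ y * f y = (∑ x, A (x, y)) * f y := by rw [hA2]
        _ = ∑ x, A (x, y) * f y := Finset.sum_mul ..
        _ = ∑ x, A (x, y) * f ((x, y) : V × V).2 := rfl
    · rw [Fintype.sum_prod_type]
      refine Finset.sum_congr rfl fun x _ => ?_
      calc m₁ x * f x = (∑ y, A (x, y)) * f x := by rw [hA1]
        _ = ∑ y, A (x, y) * f x := Finset.sum_mul ..
        _ = ∑ y, A (x, y) * f ((x, y) : V × V).1 := rfl

lemma edge_bound {V : Type*} [Fintype V] [DecidableEq V] (G : SimpleGraph V)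
    [DecidableRel G.Adj] {α : ℝ} (hα0 : 0 ≤ α) (hα1 : α ≤ 1) {a b : V} (hab : G.Adj a b)
    (f : V → ℝ) (hf : ∀ u v, f v - f u ≤ (G.dist u v : ℝ)) :
    ∑ v, lazyWalk G α b v * f v - ∑ v, lazyWalk G α a v * f v ≤ 1 - kappaAlpha G α a b := by
  have hda : 0 < G.degree a := (G.degree_pos_iff_exists_adj a).mpr ⟨b, hab⟩
  have hdb : 0 < G.degree b := (G.degree_pos_iff_exists_adj b).mpr ⟨a, hab.symm⟩
  have h1 : (G.dist a b : ℝ) = 1 := by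
    rw [SimpleGraph.dist_eq_one_iff_adj.mpr hab]; norm_num
  have hW := W_ge (fun a b => (G.dist a b : ℝ)) (fun p => Nat.cast_nonneg _) f hf
    (lazyWalk G α a) (lazyWalk G α b) (lazyWalk_isProb G hα0 hα1 hda)
    (lazyWalk_isProb G hα0 hα1 hdb)
  have hk : kappaAlpha G α a b =
      1 - W (fun a b => (G.dist a b : ℝ)) (lazyWalk G α a) (lazyWalk G α b) := by
    rw [kappaAlpha, h1, div_one]
  linarith

lemma walk_bound {V : Type*} [Fintype V] [DecidableEq V] (G : SimpleGraph V)
    [DecidableRel G.Adj] {α : ℝ} (hα0 : 0 ≤ α) (hα1 : α ≤ 1) (κ₀ : ℝ)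
    (f : V → ℝ) (hf : ∀ u v, f v - f u ≤ (G.dist u v : ℝ)) :
    ∀ {u w : V} (p : G.Walk u w), p.IsTrail →
    ∑ v, lazyWalk G α w v * f v - ∑ v, lazyWalk G α u v * f v ≤
      (p.length : ℝ) * (1 - (1 - α) * κ₀) + ∑ e ∈ p.edges.toFinset,
        Sym2.lift ⟨fun x y => max 0 ((1 - α) * κ₀ - kappaAlpha G α x y),
          fun x y => by simp only []; rw [kappaAlpha_symm]⟩ e := by
  intro u w p
  induction p with
  | nil => intro _; simp
  | cons h q ih =>
    rename_i a b c
    intro htrail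
    rw [SimpleGraph.Walk.isTrail_cons] at htrail
    have hedge : _ ∉ q.edges.toFinset := fun hm => htrail.2 (List.mem_toFinset.mp hm)
    rw [SimpleGraph.Walk.edges_cons, List.toFinset_cons, Finset.sum_insert hedge,
      SimpleGraph.Walk.length_cons]
    have hstep := edge_bound G hα0 hα1 h f hf
    have hq := ih htrail.1
    have hkb : 1 - kappaAlpha G α a b ≤ 1 - (1 - α) * κ₀ +
        max 0 ((1 - α) * κ₀ - kappaAlpha G α a b) := by
      have := le_max_right (0:ℝ) ((1 - α) * κ₀ - kappaAlpha G α a b)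
      linarith
    rw [Sym2.lift_mk]
    push_cast
    linarith

/-- Bonnet–Myers-type estimate with integral `α`-Ricci curvature. -/
theorem stmt_4 {V : Type*} [Fintype V] [DecidableEq V] (G : SimpleGraph V)
    [DecidableRel G.Adj] (hG : G.Connected) (κ₀ : ℝ) (hκ : 0 < κ₀)
    (α : ℝ) (hα : α ∈ Set.Ico (0:ℝ) 1) :
    (gDiam G : ℤ) ≤ ⌊(2 + IAlpha G α κ₀ / (1 - α)) / κ₀⌋ := by
  obtain ⟨hα0, hα1⟩ := hα
  have h1α : (0:ℝ) < 1 - α := by linarith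
  have hne : Nonempty V := hG.nonempty
  have hlift : ∀ e : Sym2 V, 0 ≤ Sym2.lift
      ⟨fun x y => max 0 ((1 - α) * κ₀ - kappaAlpha G α x y),
        fun x y => by simp only []; rw [kappaAlpha_symm]⟩ e := by
    intro e
    induction e using Sym2.ind with
    | _ x y => rw [Sym2.lift_mk]; exact le_max_left _ _
  have hI : 0 ≤ IAlpha G α κ₀ := Finset.sum_nonneg fun e _ => hlift e
  rw [Int.le_floor]
  push_cast
  rw [le_div_iff₀ hκ]
  obtain ⟨⟨x, y⟩, -, hxy⟩ := Finset.exists_mem_eq_sup Finset.univ Finset.univ_nonempty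
    (fun p : V × V => G.dist p.1 p.2)
  have hgd : gDiam G = G.dist x y := hxy
  by_cases hL0 : gDiam G = 0
  · rw [hL0]
    push_cast
    have : 0 ≤ IAlpha G α κ₀ / (1 - α) := div_nonneg hI h1α.le
    nlinarith
  -- main case
  set L := G.dist x y with hLdef
  have hL1 : 1 ≤ L := by rw [hgd] at hL0; omega
  have hx_ne_y : x ≠ y := by
    intro h
    rw [h, SimpleGraph.dist_self] at hLdef
    omega
  have hdeg : ∀ v : V, 0 < G.degree v := by
    intro v
    have hwne : ∃ w : V, w ≠ v := by
      by_cases h : v = x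
      · exact ⟨y, by rw [h]; exact fun hh => hx_ne_y hh.symm⟩
      · exact ⟨x, fun hh => h hh.symm⟩
    obtain ⟨w, hw⟩ := hwne
    obtain ⟨pw⟩ := hG.preconnected v w
    cases pw with
    | nil => exact absurd rfl hw
    | cons h _ => exact (G.degree_pos_iff_exists_adj v).mpr ⟨_, h⟩
  obtain ⟨p, hp⟩ := hG.exists_walk_length_eq_dist x y
  set q := p.bypass with hq
  have hqpath : q.IsPath := p.bypass_isPath
  have hqlen : q.length = L := by
    have h1 := p.length_bypass_le
    have h2 := G.dist_le p.bypass
    rw [hLdef, hq]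
    omega
  set f : V → ℝ := fun v => (G.dist v x : ℝ) with hfdef
  have hf : ∀ u v, f v - f u ≤ (G.dist u v : ℝ) := by
    intro u v
    have h1 : G.dist v x ≤ G.dist v u + G.dist u x := hG.dist_triangle
    rw [SimpleGraph.dist_comm (u := v) (v := u)] at h1
    simp only [hfdef]
    have h2 : (G.dist v x : ℝ) ≤ (G.dist u v : ℝ) + (G.dist u x : ℝ) := by
      exact_mod_cast h1
    linarith
  have hwb := walk_bound G hα0 hα1.le κ₀ f hf q hqpath.isTrail
  have hsub : q.edges.toFinset ⊆ G.edgeFinset := fun e he =>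
    SimpleGraph.mem_edgeFinset.mpr (q.edges_subset_edgeSet (List.mem_toFinset.mp he))
  have hPath_le : ∑ e ∈ q.edges.toFinset, Sym2.lift
      ⟨fun x y => max 0 ((1 - α) * κ₀ - kappaAlpha G α x y),
        fun x y => by simp only []; rw [kappaAlpha_symm]⟩ e ≤ IAlpha G α κ₀ :=
    Finset.sum_le_sum_of_subset_of_nonneg hsub fun e _ _ => hlift e
  have hEx : ∑ v, lazyWalk G α x v * f v = 1 - α := by
    rw [lazyWalk_expect]
    have hfx : f x = 0 := by simp [hfdef, SimpleGraph.dist_self]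
    have hstep : ∀ v ∈ G.neighborFinset x, (1 - α) / (G.degree x) * f v
        = (1 - α) / (G.degree x) := by
      intro v hv
      rw [SimpleGraph.mem_neighborFinset] at hv
      have hd1 : G.dist v x = 1 := SimpleGraph.dist_eq_one_iff_adj.mpr hv.symm
      simp [hfdef, hd1]
    rw [Finset.sum_congr rfl hstep, Finset.sum_const, hfx,
      SimpleGraph.card_neighborFinset_eq_degree, nsmul_eq_mul]
    have hdne : (G.degree x : ℝ) ≠ 0 := Nat.cast_ne_zero.mpr (hdeg x).ne'
    field_simp
    ring
  have hEy : (L : ℝ) - (1 - α) ≤ ∑ v, lazyWalk G α y v * f v := by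
    rw [lazyWalk_expect]
    have hfy : f y = (L : ℝ) := by
      simp only [hfdef]
      rw [SimpleGraph.dist_comm]
    have hstep : ∀ v ∈ G.neighborFinset y,
        (1 - α) / (G.degree y) * ((L : ℝ) - 1) ≤ (1 - α) / (G.degree y) * f v := by
      intro v hv
      rw [SimpleGraph.mem_neighborFinset] at hv
      refine mul_le_mul_of_nonneg_left ?_ (div_nonneg h1α.le (Nat.cast_nonneg _))
      have h1 : G.dist y x ≤ G.dist y v + G.dist v x := hG.dist_triangle
      have h2 : G.dist y v = 1 := SimpleGraph.dist_eq_one_iff_adj.mpr hv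
      have h3 : G.dist y x = L := by rw [SimpleGraph.dist_comm]
      rw [h2, h3] at h1
      simp only [hfdef]
      have h4 : (L : ℝ) ≤ 1 + (G.dist v x : ℝ) := by exact_mod_cast h1
      linarith
    have hsumc : ∑ _v ∈ G.neighborFinset y, (1 - α) / (G.degree y) * ((L : ℝ) - 1)
        = (1 - α) * ((L : ℝ) - 1) := by
      rw [Finset.sum_const, SimpleGraph.card_neighborFinset_eq_degree, nsmul_eq_mul]
      have hdne : (G.degree y : ℝ) ≠ 0 := Nat.cast_ne_zero.mpr (hdeg y).ne'
      field_simp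
    have hge := Finset.sum_le_sum hstep
    rw [hsumc] at hge
    have hL1' : (1 : ℝ) ≤ (L : ℝ) := by exact_mod_cast hL1
    rw [hfy]
    nlinarith
  have hq_cast : (q.length : ℝ) = (L : ℝ) := by exact_mod_cast hqlen
  rw [hgd]
  have key : (L : ℝ) * ((1 - α) * κ₀) ≤ 2 * (1 - α) + IAlpha G α κ₀ := by
    rw [hq_cast] at hwb
    nlinarith [hwb, hEx, hEy, hPath_le]
  have hIv : IAlpha G α κ₀ / (1 - α) * (1 - α) = IAlpha G α κ₀ :=
    div_mul_cancel₀ _ h1α.ne'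
  nlinarith [key, hIv, h1α]
end

section
/- Let G be a finite connected simple graph whose Lin–Lu–Yau Ricci curvature satisfies κ_LLY(x,y) ≥ κ_0 > 0 for every edge xy. Then Diam(G) ≤ ⌊2/κ_0⌋. -/
open Finset

section aux
variable {V : Type*} [Fintype V] {d : V → V → ℝ} {m₁ m₂ m₃ : V → ℝ}

lemma prod_coupling (h₁ : IsProbMeasure m₁) (h₂ : IsProbMeasure m₂) :
    IsCoupling (fun p : V × V => m₁ p.1 * m₂ p.2) m₁ m₂ := by
  refine ⟨fun p => mul_nonneg (h₁.1 _) (h₂.1 _), fun x => ?_, fun y => ?_⟩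
  · simp only [← Finset.mul_sum, h₂.2, mul_one]
  · simp only [← Finset.sum_mul, h₁.2, one_mul]

lemma Wset_nonempty (h₁ : IsProbMeasure m₁) (h₂ : IsProbMeasure m₂) :
    {c | ∃ A, IsCoupling A m₁ m₂ ∧ c = ∑ p : V × V, A p * d p.1 p.2}.Nonempty :=
  ⟨_, _, prod_coupling h₁ h₂, rfl⟩

lemma Wset_bddBelow (hd : ∀ x y, 0 ≤ d x y) :
    BddBelow {c | ∃ A, IsCoupling A m₁ m₂ ∧ c = ∑ p : V × V, A p * d p.1 p.2} := by
  refine ⟨0, ?_⟩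
  rintro c ⟨A, hA, rfl⟩
  exact Finset.sum_nonneg fun p _ => mul_nonneg (hA.1 p) (hd _ _)

lemma W_le (hd : ∀ x y, 0 ≤ d x y) {A : V × V → ℝ} (hA : IsCoupling A m₁ m₂) :
    W d m₁ m₂ ≤ ∑ p : V × V, A p * d p.1 p.2 :=
  csInf_le (Wset_bddBelow hd) ⟨A, hA, rfl⟩

lemma le_W (h₁ : IsProbMeasure m₁) (h₂ : IsProbMeasure m₂) {b : ℝ}
    (hb : ∀ A : V × V → ℝ, IsCoupling A m₁ m₂ → b ≤ ∑ p : V × V, A p * d p.1 p.2) :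
    b ≤ W d m₁ m₂ := by
  refine le_csInf (Wset_nonempty h₁ h₂) ?_
  rintro c ⟨A, hA, rfl⟩
  exact hb A hA

/-- gluing / triangle inequality for W -/
lemma W_triangle (hd : ∀ x y, 0 ≤ d x y) (htri : ∀ x y z, d x z ≤ d x y + d y z)
    (h₁ : IsProbMeasure m₁) (h₂ : IsProbMeasure m₂) (h₃ : IsProbMeasure m₃) :
    W d m₁ m₃ ≤ W d m₁ m₂ + W d m₂ m₃ := by
  have key : ∀ (A B : V × V → ℝ), IsCoupling A m₁ m₂ → IsCoupling B m₂ m₃ →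
      W d m₁ m₃ ≤ (∑ p : V × V, A p * d p.1 p.2) + ∑ p : V × V, B p * d p.1 p.2 := by
    intro A B hA hB
    have hAle : ∀ x y, A (x, y) ≤ m₂ y := by
      intro x y
      rw [← hA.2.2 y]
      exact Finset.single_le_sum (fun i _ => hA.1 (i, y)) (Finset.mem_univ x)
    have hBle : ∀ y z, B (y, z) ≤ m₂ y := by
      intro y z
      rw [← hB.2.1 y]
      exact Finset.single_le_sum (fun i _ => hB.1 (y, i)) (Finset.mem_univ z)
    have hzeroA : ∀ x y, m₂ y = 0 → A (x, y) = 0 :=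
      fun x y h => le_antisymm (h ▸ hAle x y) (hA.1 _)
    have hzeroB : ∀ y z, m₂ y = 0 → B (y, z) = 0 :=
      fun y z h => le_antisymm (h ▸ hBle y z) (hB.1 _)
    set t : V → V → V → ℝ :=
      fun x y z => if m₂ y = 0 then 0 else A (x, y) * B (y, z) / m₂ y with ht
    have htnn : ∀ x y z, 0 ≤ t x y z := by
      intro x y z
      rw [ht]
      dsimp only
      split
      · exact le_refl 0
      · exact div_nonneg (mul_nonneg (hA.1 _) (hB.1 _)) (h₂.1 y)
    have hsumz : ∀ x y, ∑ z, t x y z = A (x, y) := by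
      intro x y
      by_cases h : m₂ y = 0
      · simp [ht, h, hzeroA x y h]
      · simp only [ht, if_neg h]
        rw [← Finset.sum_div, ← Finset.mul_sum, hB.2.1 y]
        field_simp
    have hsumx : ∀ y z, ∑ x, t x y z = B (y, z) := by
      intro y z
      by_cases h : m₂ y = 0
      · simp [ht, h, hzeroB y z h]
      · simp only [ht, if_neg h]
        rw [← Finset.sum_div, ← Finset.sum_mul, hA.2.2 y]
        field_simp
    set C : V × V → ℝ := fun p => ∑ y, t p.1 y p.2 with hC
    have hCcoup : IsCoupling C m₁ m₃ := by
      refine ⟨fun p => Finset.sum_nonneg fun y _ => htnn _ _ _, fun x => ?_, fun z => ?_⟩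
      · show ∑ z, ∑ y, t x y z = m₁ x
        rw [Finset.sum_comm]
        simp only [hsumz]
        exact hA.2.1 x
      · show ∑ x, ∑ y, t x y z = m₃ z
        rw [Finset.sum_comm]
        simp only [hsumx]
        exact hB.2.2 z
    have hCW : W d m₁ m₃ ≤ ∑ p : V × V, C p * d p.1 p.2 := W_le hd hCcoup
    have eC : (∑ p : V × V, C p * d p.1 p.2) = ∑ x, ∑ z, (∑ y, t x y z) * d x z :=
      Fintype.sum_prod_type _
    have eA : (∑ p : V × V, A p * d p.1 p.2) = ∑ x, ∑ y, A (x, y) * d x y :=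
      Fintype.sum_prod_type _
    have eB : (∑ p : V × V, B p * d p.1 p.2) = ∑ y, ∑ z, B (y, z) * d y z :=
      Fintype.sum_prod_type _
    rw [eA, eB]
    refine hCW.trans ?_
    rw [eC]
    calc ∑ x, ∑ z, (∑ y, t x y z) * d x z
        ≤ ∑ x, ∑ z, ∑ y, t x y z * (d x y + d y z) := by
          refine Finset.sum_le_sum fun x _ => Finset.sum_le_sum fun z _ => ?_
          rw [Finset.sum_mul]
          exact Finset.sum_le_sum fun y _ =>
            mul_le_mul_of_nonneg_left (htri x y z) (htnn x y z)
      _ = (∑ x, ∑ z, ∑ y, t x y z * d x y) + ∑ x, ∑ z, ∑ y, t x y z * d y z := by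
          simp only [mul_add, Finset.sum_add_distrib]
      _ = (∑ x, ∑ y, A (x, y) * d x y) + ∑ y, ∑ z, B (y, z) * d y z := by
          congr 1
          · refine Finset.sum_congr rfl fun x _ => ?_
            rw [Finset.sum_comm]
            refine Finset.sum_congr rfl fun y _ => ?_
            rw [← Finset.sum_mul, hsumz]
          · have e1 : ∀ x : V, ∑ z, ∑ y, t x y z * d y z = ∑ y, ∑ z, t x y z * d y z :=
              fun x => Finset.sum_comm
            simp only [e1]
            rw [Finset.sum_comm]
            refine Finset.sum_congr rfl fun y _ => ?_
            rw [Finset.sum_comm]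
            refine Finset.sum_congr rfl fun z _ => ?_
            rw [← Finset.sum_mul, hsumx]
  have hne12 := Wset_nonempty (d := d) h₁ h₂
  have hne23 := Wset_nonempty (d := d) h₂ h₃
  have step : ∀ c₂ ∈ {c | ∃ A, IsCoupling A m₂ m₃ ∧ c = ∑ p : V × V, A p * d p.1 p.2},
      W d m₁ m₃ - c₂ ≤ W d m₁ m₂ := by
    rintro c₂ ⟨B, hB, rfl⟩
    refine le_csInf hne12 ?_
    rintro c₁ ⟨A, hA, rfl⟩
    linarith [key A B hA hB]
  have h23 : W d m₁ m₃ - W d m₁ m₂ ≤ W d m₂ m₃ :=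
    le_csInf hne23 (fun c₂ hc₂ => by linarith [step c₂ hc₂])
  linarith
end aux


section lw
variable {V : Type*} [Fintype V] [DecidableEq V] (G : SimpleGraph V) [DecidableRel G.Adj]

lemma lazyWalk_split (α : ℝ) (x v : V) :
    lazyWalk G α x v
      = (if v = x then α else 0) + (if G.Adj x v then (1 - α) / (G.degree x) else 0) := by
  unfold lazyWalk
  by_cases h : v = x
  · subst h
    simp [G.irrefl]
  · simp [h]

lemma neighborFinset_eq_filter' (x : V) :
    G.neighborFinset x = Finset.univ.filter (G.Adj x) := by
  ext v
  simp

lemma lazyWalk_sum_mul (α : ℝ) (x : V) (g : V → ℝ) :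
    ∑ v, lazyWalk G α x v * g v
      = α * g x + ((1 - α) / (G.degree x)) * ∑ v ∈ G.neighborFinset x, g v := by
  simp only [lazyWalk_split, add_mul, Finset.sum_add_distrib]
  congr 1
  · simp only [ite_mul, zero_mul, Finset.sum_ite_eq', Finset.mem_univ, if_true]
  · rw [Finset.mul_sum, neighborFinset_eq_filter', Finset.sum_filter]
    simp only [ite_mul, zero_mul]

lemma lazyWalk_prob {α : ℝ} (h0 : 0 ≤ α) (h1 : α ≤ 1) {x : V} (hx : 0 < G.degree x) :
    IsProbMeasure (lazyWalk G α x) := by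
  constructor
  · intro v
    rw [lazyWalk_split]
    have : (0:ℝ) < G.degree x := by exact_mod_cast hx
    refine add_nonneg ?_ ?_
    · split
      · exact h0
      · exact le_rfl
    · split
      · exact div_nonneg (by linarith) this.le
      · exact le_rfl
  · rw [show (∑ v, lazyWalk G α x v) = ∑ v, lazyWalk G α x v * 1 by simp,
      lazyWalk_sum_mul G α x (fun _ => 1)]
    rw [Finset.sum_const, SimpleGraph.card_neighborFinset_eq_degree]
    simp only [mul_one, nsmul_eq_mul]
    have hne : (G.degree x : ℝ) ≠ 0 := by positivity
    field_simp
    ring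

lemma lazyWalk_one (x : V) : lazyWalk G 1 x = fun v => if v = x then 1 else 0 := by
  funext v
  rw [lazyWalk_split]
  simp

lemma lazyWalk_affine {lam α : ℝ} (x : V) :
    lazyWalk G (lam * α + (1 - lam)) x
      = fun v => lam * lazyWalk G α x v + (1 - lam) * (if v = x then 1 else 0) := by
  funext v
  simp only [lazyWalk_split]
  by_cases h : v = x <;> by_cases h2 : G.Adj x v <;> simp [h, h2] <;> ring

end lw

section conv
variable {V : Type*} [Fintype V] [DecidableEq V] {d : V → V → ℝ} {m₁ m₂ : V → ℝ}

lemma W_self_le_zero (hd : ∀ a b, 0 ≤ d a b) (hd0 : ∀ a, d a a = 0)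
    (h₁ : IsProbMeasure m₁) : W d m₁ m₁ ≤ 0 := by
  have hcoup : IsCoupling (fun p : V × V => if p.1 = p.2 then m₁ p.1 else 0) m₁ m₁ := by
    refine ⟨fun p => ?_, fun x => ?_, fun y => ?_⟩
    · dsimp only; split
      · exact h₁.1 _
      · exact le_rfl
    · simp
    · simp
  refine (W_le hd hcoup).trans (le_of_eq ?_)
  refine Finset.sum_eq_zero fun p _ => ?_
  by_cases h : p.1 = p.2
  · rw [if_pos h, h, hd0, mul_zero]
  · rw [if_neg h, zero_mul]

lemma W_convex_delta (x y : V) (hd : ∀ a b, 0 ≤ d a b)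
    (h₁ : IsProbMeasure m₁) (h₂ : IsProbMeasure m₂) {lam : ℝ} (hl0 : 0 < lam) (hl1 : lam ≤ 1) :
    W d (fun v => lam * m₁ v + (1 - lam) * (if v = x then 1 else 0))
        (fun v => lam * m₂ v + (1 - lam) * (if v = y then 1 else 0))
      ≤ lam * W d m₁ m₂ + (1 - lam) * d x y := by
  set n₁ : V → ℝ := fun v => lam * m₁ v + (1 - lam) * (if v = x then 1 else 0) with hn₁
  set n₂ : V → ℝ := fun v => lam * m₂ v + (1 - lam) * (if v = y then 1 else 0) with hn₂
  have key : ∀ A : V × V → ℝ, IsCoupling A m₁ m₂ →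
      W d n₁ n₂ ≤ lam * (∑ p : V × V, A p * d p.1 p.2) + (1 - lam) * d x y := by
    intro A hA
    set B : V × V → ℝ := fun p => lam * A p + (1 - lam) * (if p = (x, y) then 1 else 0)
      with hB
    have hBcoup : IsCoupling B n₁ n₂ := by
      refine ⟨fun p => ?_, fun u => ?_, fun v => ?_⟩
      · simp only [hB]
        refine add_nonneg (mul_nonneg hl0.le (hA.1 p)) (mul_nonneg (by linarith) ?_)
        split
        · exact zero_le_one
        · exact le_rfl
      · simp only [hB, hn₁]
        rw [Finset.sum_add_distrib, ← Finset.mul_sum, hA.2.1 u, ← Finset.mul_sum]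
        congr 1
        congr 1
        by_cases h : u = x
        · simp [h, Prod.ext_iff]
        · simp [h, Prod.ext_iff]
      · simp only [hB, hn₂]
        rw [Finset.sum_add_distrib, ← Finset.mul_sum, hA.2.2 v, ← Finset.mul_sum]
        congr 1
        congr 1
        by_cases h : v = y
        · simp [h, Prod.ext_iff]
        · simp [h, Prod.ext_iff]
    refine (W_le hd hBcoup).trans (le_of_eq ?_)
    simp only [hB, add_mul, Finset.sum_add_distrib, mul_assoc, ← Finset.mul_sum]
    congr 2
    simp [ite_mul, zero_mul, Finset.sum_ite_eq']
  have hne := Wset_nonempty (d := d) h₁ h₂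
  have step : ∀ c ∈ {c | ∃ A, IsCoupling A m₁ m₂ ∧ c = ∑ p : V × V, A p * d p.1 p.2},
      (W d n₁ n₂ - (1 - lam) * d x y) / lam ≤ c := by
    rintro c ⟨A, hA, rfl⟩
    rw [div_le_iff₀ hl0]
    linarith [key A hA]
  have hfin : (W d n₁ n₂ - (1 - lam) * d x y) / lam ≤ W d m₁ m₂ := le_csInf hne step
  rw [div_le_iff₀ hl0] at hfin
  nlinarith
end conv

section graph
variable {V : Type*} [Fintype V] [DecidableEq V] (G : SimpleGraph V) [DecidableRel G.Adj]

lemma degree_pos_all (hG : G.Connected) (hnt : Nontrivial V) (v : V) : 0 < G.degree v := by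
  rw [SimpleGraph.degree_pos_iff_exists_adj]
  obtain ⟨w, hw⟩ := exists_ne v
  obtain ⟨p⟩ := hG.preconnected v w
  cases p with
  | nil => exact absurd rfl hw.symm
  | cons h q => exact ⟨_, h⟩

lemma coupling_sum_fst {A : V × V → ℝ} {m₁ m₂ : V → ℝ} (hA : IsCoupling A m₁ m₂) (f : V → ℝ) :
    ∑ p : V × V, A p * f p.1 = ∑ u, m₁ u * f u := by
  rw [show (∑ p : V × V, A p * f p.1) = ∑ u, ∑ v, A (u, v) * f u from Fintype.sum_prod_type _]
  refine Finset.sum_congr rfl fun u _ => ?_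
  rw [← Finset.sum_mul, hA.2.1 u]

lemma coupling_sum_snd {A : V × V → ℝ} {m₁ m₂ : V → ℝ} (hA : IsCoupling A m₁ m₂) (f : V → ℝ) :
    ∑ p : V × V, A p * f p.2 = ∑ v, m₂ v * f v := by
  rw [show (∑ p : V × V, A p * f p.2) = ∑ u, ∑ v, A (u, v) * f v from Fintype.sum_prod_type _]
  rw [Finset.sum_comm]
  refine Finset.sum_congr rfl fun v _ => ?_
  rw [← Finset.sum_mul, hA.2.2 v]

/-- The dual lower bound `d(x,y) - 2(1-α) ≤ W(m_x^α, m_y^α)`. -/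
lemma W_edge_lower (hG : G.Connected) (hnt : Nontrivial V) {α : ℝ} (h0 : 0 ≤ α) (h1 : α ≤ 1)
    (x y : V) :
    (G.dist x y : ℝ) - 2 * (1 - α)
      ≤ W (fun a b => (G.dist a b : ℝ)) (lazyWalk G α x) (lazyWalk G α y) := by
  have hpx := lazyWalk_prob G h0 h1 (degree_pos_all G hG hnt x)
  have hpy := lazyWalk_prob G h0 h1 (degree_pos_all G hG hnt y)
  refine le_W hpx hpy ?_
  intro A hA
  set f : V → ℝ := fun v => (G.dist x v : ℝ) with hf
  have step1 : ∑ p : V × V, A p * (f p.2 - f p.1) ≤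
      ∑ p : V × V, A p * (G.dist p.1 p.2 : ℝ) := by
    refine Finset.sum_le_sum fun p _ => mul_le_mul_of_nonneg_left ?_ (hA.1 p)
    have htri : G.dist x p.2 ≤ G.dist x p.1 + G.dist p.1 p.2 := hG.dist_triangle
    have htri' : (G.dist x p.2 : ℝ) ≤ (G.dist x p.1 : ℝ) + (G.dist p.1 p.2 : ℝ) := by
      exact_mod_cast htri
    rw [hf]
    dsimp only
    linarith
  refine le_trans ?_ step1
  have expand : ∑ p : V × V, A p * (f p.2 - f p.1)
      = (∑ v, lazyWalk G α y v * f v) - ∑ u, lazyWalk G α x u * f u := by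
    simp only [mul_sub, Finset.sum_sub_distrib]
    rw [coupling_sum_snd hA, coupling_sum_fst hA]
  rw [expand]
  have hdy : (0:ℝ) < (G.degree y : ℝ) := by exact_mod_cast degree_pos_all G hG hnt y
  have hdx : (0:ℝ) < (G.degree x : ℝ) := by exact_mod_cast degree_pos_all G hG hnt x
  have hy2 : α * f y + ((1 - α) / (G.degree y)) * ((G.degree y) * ((G.dist x y : ℝ) - 1))
      ≤ ∑ v, lazyWalk G α y v * f v := by
    rw [lazyWalk_sum_mul]
    refine add_le_add ?_ ?_
    · rw [hf]
    · refine mul_le_mul_of_nonneg_left ?_ (div_nonneg (by linarith) hdy.le)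
      calc (G.degree y : ℝ) * ((G.dist x y : ℝ) - 1)
          = ∑ _v ∈ G.neighborFinset y, ((G.dist x y : ℝ) - 1) := by
            rw [Finset.sum_const, SimpleGraph.card_neighborFinset_eq_degree, nsmul_eq_mul]
        _ ≤ ∑ v ∈ G.neighborFinset y, f v := by
            refine Finset.sum_le_sum fun v hv => ?_
            rw [SimpleGraph.mem_neighborFinset] at hv
            have htri : G.dist x y ≤ G.dist x v + G.dist v y := hG.dist_triangle
            have hvy : G.dist v y = 1 := SimpleGraph.dist_eq_one_iff_adj.mpr hv.symm
            rw [hvy] at htri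
            have h5 : (G.dist x y : ℝ) ≤ (G.dist x v : ℝ) + 1 := by exact_mod_cast htri
            rw [hf]
            dsimp only
            linarith
  have hx2 : ∑ u, lazyWalk G α x u * f u ≤ (1 - α) := by
    rw [lazyWalk_sum_mul]
    have hfx : f x = 0 := by simp [hf]
    rw [hfx, mul_zero, zero_add]
    calc ((1 - α) / (G.degree x)) * ∑ u ∈ G.neighborFinset x, f u
        ≤ ((1 - α) / (G.degree x)) * ((G.degree x : ℝ) * 1) := by
          refine mul_le_mul_of_nonneg_left ?_ (div_nonneg (by linarith) hdx.le)
          calc ∑ u ∈ G.neighborFinset x, f u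
              ≤ ∑ _u ∈ G.neighborFinset x, (1:ℝ) := by
                refine Finset.sum_le_sum fun u hu => ?_
                rw [SimpleGraph.mem_neighborFinset] at hu
                have h6 : G.dist x u = 1 := SimpleGraph.dist_eq_one_iff_adj.mpr hu
                rw [hf]
                dsimp only
                rw [h6]
                norm_num
            _ = (G.degree x : ℝ) * 1 := by
                rw [Finset.sum_const, SimpleGraph.card_neighborFinset_eq_degree, nsmul_eq_mul]
      _ = (1 - α) := by field_simp
  have hy3 : α * f y + ((1 - α) / (G.degree y)) * ((G.degree y) * ((G.dist x y : ℝ) - 1))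
      = α * (G.dist x y : ℝ) + (1 - α) * ((G.dist x y : ℝ) - 1) := by
    rw [hf]
    field_simp
  rw [hy3] at hy2
  have hfy : f y = (G.dist x y : ℝ) := rfl
  nlinarith [hy2, hx2]

/-- Chain/subadditivity upper bound along a walk. -/
lemma W_chain (hG : G.Connected) (hnt : Nontrivial V) {a : ℝ} (h0 : 0 ≤ a) (h1 : a ≤ 1)
    {c : ℝ}
    (hc : ∀ u v, G.Adj u v →
      W (fun s t => (G.dist s t : ℝ)) (lazyWalk G a u) (lazyWalk G a v) ≤ c)
    {x y : V} (p : G.Walk x y) :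
    W (fun s t => (G.dist s t : ℝ)) (lazyWalk G a x) (lazyWalk G a y) ≤ p.length * c := by
  induction p with
  | nil =>
    simp only [SimpleGraph.Walk.length_nil, Nat.cast_zero, zero_mul]
    exact W_self_le_zero (fun s t => Nat.cast_nonneg _) (fun s => by simp)
      (lazyWalk_prob G h0 h1 (degree_pos_all G hG hnt _))
  | cons h q ih =>
    rename_i u v w
    have htri := W_triangle (d := fun s t => (G.dist s t : ℝ))
      (fun s t => Nat.cast_nonneg _)
      (fun s t r => by exact_mod_cast hG.dist_triangle)
      (lazyWalk_prob G h0 h1 (degree_pos_all G hG hnt u))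
      (lazyWalk_prob G h0 h1 (degree_pos_all G hG hnt v))
      (lazyWalk_prob G h0 h1 (degree_pos_all G hG hnt w))
    have hedge := hc u v h
    simp only [SimpleGraph.Walk.length_cons, Nat.cast_add, Nat.cast_one]
    calc W (fun s t => (G.dist s t : ℝ)) (lazyWalk G a u) (lazyWalk G a w)
        ≤ _ + _ := htri
      _ ≤ c + q.length * c := add_le_add hedge ih
      _ = (q.length + 1) * c := by ring

lemma kappaAlpha_edge {x y : V} (hxy : G.Adj x y) (a : ℝ) :
    kappaAlpha G a x y
      = 1 - W (fun s t => (G.dist s t : ℝ)) (lazyWalk G a x) (lazyWalk G a y) := by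
  unfold kappaAlpha
  have h1 : G.dist x y = 1 := SimpleGraph.dist_eq_one_iff_adj.mpr hxy
  rw [h1]
  norm_num

lemma edge_q_mono (hG : G.Connected) (hnt : Nontrivial V) {x y : V} (hxy : G.Adj x y) :
    MonotoneOn (fun a => kappaAlpha G a x y / (1 - a)) (Set.Ioo (0:ℝ) 1) := by
  rintro a ⟨ha0, ha1⟩ b ⟨hb0, hb1⟩ hab
  set lam : ℝ := (1 - b) / (1 - a) with hlam
  have hden : (0:ℝ) < 1 - a := by linarith
  have hdenb : (0:ℝ) < 1 - b := by linarith
  have hl0 : 0 < lam := div_pos hdenb hden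
  have hl1 : lam ≤ 1 := by
    rw [hlam, div_le_one hden]
    linarith
  have hlama : lam * (1 - a) = 1 - b := by
    rw [hlam]
    field_simp
  have hbeq : b = lam * a + (1 - lam) := by nlinarith [hlama]
  set Wa := W (fun s t => (G.dist s t : ℝ)) (lazyWalk G a x) (lazyWalk G a y) with hWa
  set Wb := W (fun s t => (G.dist s t : ℝ)) (lazyWalk G b x) (lazyWalk G b y) with hWb
  have hconv : Wb ≤ lam * Wa + (1 - lam) * (G.dist x y : ℝ) := by
    rw [hWb, hbeq, lazyWalk_affine G x, lazyWalk_affine G y]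
    exact W_convex_delta x y (fun s t => Nat.cast_nonneg _)
      (lazyWalk_prob G ha0.le ha1.le (degree_pos_all G hG hnt x))
      (lazyWalk_prob G ha0.le ha1.le (degree_pos_all G hG hnt y)) hl0 hl1
  have hdist1 : (G.dist x y : ℝ) = 1 := by
    rw [SimpleGraph.dist_eq_one_iff_adj.mpr hxy]
    norm_num
  rw [hdist1, mul_one] at hconv
  simp only [kappaAlpha_edge G hxy, ← hWa, ← hWb]
  rw [div_le_div_iff₀ hden hdenb]
  have hkey : lam * (1 - Wa) ≤ 1 - Wb := by linarith
  have h4 := mul_le_mul_of_nonneg_right hkey hden.le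
  have h5 : lam * (1 - Wa) * (1 - a) = (1 - Wa) * (1 - b) := by
    rw [mul_right_comm, hlama]
    ring
  linarith

lemma edge_q_bdd (hG : G.Connected) (hnt : Nontrivial V) {x y : V} (hxy : G.Adj x y)
    {a : ℝ} (ha : a ∈ Set.Ioo (0:ℝ) 1) :
    kappaAlpha G a x y / (1 - a) ≤ 2 := by
  obtain ⟨ha0, ha1⟩ := ha
  have hden : (0:ℝ) < 1 - a := by linarith
  have hlow := W_edge_lower G hG hnt ha0.le ha1.le x y
  have hdist1 : (G.dist x y : ℝ) = 1 := by
    rw [SimpleGraph.dist_eq_one_iff_adj.mpr hxy]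
    norm_num
  rw [hdist1] at hlow
  rw [kappaAlpha_edge G hxy, div_le_iff₀ hden]
  linarith

lemma edge_tendsto (hG : G.Connected) (hnt : Nontrivial V) {x y : V} (hxy : G.Adj x y) :
    Filter.Tendsto (fun a => kappaAlpha G a x y / (1 - a))
      (nhdsWithin 1 (Set.Ico (0:ℝ) 1)) (nhds (kappaLLY G x y)) := by
  have hmono := edge_q_mono G hG hnt hxy
  have hbdd : BddAbove ((fun a => kappaAlpha G a x y / (1 - a)) '' Set.Ioo (0:ℝ) 1) := by
    refine ⟨2, ?_⟩
    rintro r ⟨a, ha, rfl⟩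
    exact edge_q_bdd G hG hnt hxy ha
  have hne : (Set.Ioo (0:ℝ) 1).Nonempty := ⟨1/2, by norm_num, by norm_num⟩
  have htend := MonotoneOn.tendsto_nhdsWithin_Ioo_left hne hmono hbdd
  have hfilter : nhdsWithin (1:ℝ) (Set.Ico (0:ℝ) 1) = nhdsWithin 1 (Set.Iio 1) :=
    nhdsWithin_Ico_eq_nhdsLT zero_lt_one
  rw [hfilter]
  have hLLY : kappaLLY G x y
      = sSup ((fun a => kappaAlpha G a x y / (1 - a)) '' Set.Ioo (0:ℝ) 1) := by
    unfold kappaLLY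
    rw [hfilter]
    exact htend.limUnder_eq
  rw [hLLY]
  exact htend

end graph


/-- Lin–Lu–Yau Bonnet–Myers theorem: positively curved graphs have diameter `≤ ⌊2/κ₀⌋`. -/
theorem stmt_5 {V : Type*} [Fintype V] [DecidableEq V] (G : SimpleGraph V)
    [DecidableRel G.Adj] (hG : G.Connected) (κ₀ : ℝ) (hκ : 0 < κ₀)
    (hcurv : ∀ x y, G.Adj x y → κ₀ ≤ kappaLLY G x y) :
    (gDiam G : ℤ) ≤ ⌊2 / κ₀⌋ := by
  rw [Int.le_floor]
  rcases subsingleton_or_nontrivial V with hV | hV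
  · have h0 : gDiam G = 0 := by
      refine Nat.le_antisymm ?_ (Nat.zero_le _)
      refine Finset.sup_le fun p _ => ?_
      have hpp : p.1 = p.2 := Subsingleton.elim _ _
      rw [hpp, SimpleGraph.dist_self]
    rw [h0]
    push_cast
    positivity
  · have key : ∀ x y : V, (G.dist x y : ℝ) * κ₀ ≤ 2 := by
      intro x y
      refine le_of_forall_pos_le_add ?_
      intro ε hε
      set D : ℝ := (G.dist x y : ℝ) with hD
      have hD0 : 0 ≤ D := Nat.cast_nonneg _
      set δ : ℝ := ε / (D + 1) with hδ
      have hD1 : (0:ℝ) < D + 1 := by linarith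
      have hδ0 : 0 < δ := div_pos hε hD1
      haveI : (nhdsWithin (1:ℝ) (Set.Ico (0:ℝ) 1)).NeBot := by
        rw [nhdsWithin_Ico_eq_nhdsLT zero_lt_one]
        infer_instance
      have hedges : ∀ᶠ a in nhdsWithin (1:ℝ) (Set.Ico (0:ℝ) 1),
          ∀ u v : V, G.Adj u v → κ₀ - δ < kappaAlpha G a u v / (1 - a) := by
        refine Filter.eventually_all.mpr fun u => Filter.eventually_all.mpr fun v => ?_
        by_cases h : G.Adj u v
        · have ht := edge_tendsto G hG hV h
          have hlt : κ₀ - δ < kappaLLY G u v := by linarith [hcurv u v h]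
          have := (tendsto_order.1 ht).1 (κ₀ - δ) hlt
          exact this.mono fun a ha _ => ha
        · exact Filter.Eventually.of_forall fun a hadj => absurd hadj h
      have hIoo : ∀ᶠ a in nhdsWithin (1:ℝ) (Set.Ico (0:ℝ) 1), a ∈ Set.Ioo (0:ℝ) 1 := by
        rw [nhdsWithin_Ico_eq_nhdsLT zero_lt_one]
        exact Ioo_mem_nhdsLT zero_lt_one
      obtain ⟨a, hall, ha0, ha1⟩ := (hedges.and hIoo).exists
      have hden : (0:ℝ) < 1 - a := by linarith
      set c : ℝ := 1 - (1 - a) * (κ₀ - δ) with hc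
      have hedgeW : ∀ u v, G.Adj u v →
          W (fun s t => (G.dist s t : ℝ)) (lazyWalk G a u) (lazyWalk G a v) ≤ c := by
        intro u v h
        have h1 := hall u v h
        rw [kappaAlpha_edge G h, lt_div_iff₀ hden] at h1
        rw [hc]
        nlinarith [h1]
      obtain ⟨p, hp⟩ := hG.exists_walk_length_eq_dist x y
      have hup := W_chain G hG hV ha0.le ha1.le hedgeW p
      rw [hp] at hup
      have hlow := W_edge_lower G hG hV ha0.le ha1.le x y
      have h6 : D - 2 * (1 - a) ≤ D * c := le_trans hlow (by exact_mod_cast hup)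
      rw [hc] at h6
      have h7 : (D * (κ₀ - δ)) * (1 - a) ≤ 2 * (1 - a) := by nlinarith [h6]
      have h8 : D * (κ₀ - δ) ≤ 2 := le_of_mul_le_mul_right h7 hden
      have hDδ : D * δ ≤ ε := by
        rw [hδ, mul_div_assoc']
        rw [div_le_iff₀ hD1]
        nlinarith
      nlinarith [h8, hDδ]
    have hne : (Finset.univ : Finset (V × V)).Nonempty := by
      have : Nonempty V := hG.nonempty
      exact Finset.univ_nonempty
    obtain ⟨q, _, hq⟩ := Finset.exists_mem_eq_sup Finset.univ hne
      (fun p : V × V => G.dist p.1 p.2)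
    have hdiam : gDiam G = G.dist q.1 q.2 := hq
    push_cast
    rw [hdiam, le_div_iff₀ hκ]
    exact key q.1 q.2
end
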